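/- Let Y be a semistandard skew tableau with a_{i,j}(Y) the number of i's in row j. Then the reverse reading word of Y is a Yamanouchi word (lattice permutation) if and only if Σ_{k=1}^{j} a_{i+1,k}(Y) ≤ Σ_{k=1}^{j-1} a_{i,k}(Y) for all 1 ≤ j ≤ n and 1 ≤ i < n. In particular, the Yamanouchi condition implies a_{i,j}(Y) = 0 whenever i > j. -/

import Mathlib

open Finset

/-- Interlacing condition IC(1): `t_j^(i+1) ≥ t_j^(i)` for `1 ≤ j ≤ i ≤ n-1`. -/
def IsIC1 (n : ℕ) (t : ℕ → ℕ → ℤ) : Prop :=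
  ∀ i j : ℕ, 1 ≤ j → j ≤ i → i + 1 ≤ n → t i j ≤ t (i + 1) j

/-- Interlacing condition IC(2): `t_j^(i) ≥ t_{j+1}^(i+1)`. -/
def IsIC2 (n : ℕ) (t : ℕ → ℕ → ℤ) : Prop :=
  ∀ i j : ℕ, 1 ≤ j → j ≤ i → i + 1 ≤ n → t (i + 1) (j + 1) ≤ t i j

/-- Rhombus condition RC(1): `h_{a,b} + h_{a-1,b-1} ≥ h_{a-1,b} + h_{a,b-1}` for `1 ≤ a < b ≤ n`. -/
def IsRC1 (n : ℕ) (h : ℕ → ℕ → ℤ) : Prop :=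
  ∀ a b : ℕ, 1 ≤ a → a < b → b ≤ n →
    h (a - 1) b + h a (b - 1) ≤ h a b + h (a - 1) (b - 1)

/-- Rhombus condition RC(2): `h_{a-1,b} + h_{a,b} ≥ h_{a,b+1} + h_{a-1,b-1}` for `1 ≤ a ≤ b < n`. -/
def IsRC2 (n : ℕ) (h : ℕ → ℕ → ℤ) : Prop :=
  ∀ a b : ℕ, 1 ≤ a → a ≤ b → b < n →
    h a (b + 1) + h (a - 1) (b - 1) ≤ h (a - 1) b + h a b

/-- Rhombus condition RC(3): `h_{a,b} + h_{a,b+1} ≥ h_{a+1,b+1} + h_{a-1,b}` for `1 ≤ a ≤ b < n`. -/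
def IsRC3 (n : ℕ) (h : ℕ → ℕ → ℤ) : Prop :=
  ∀ a b : ℕ, 1 ≤ a → a ≤ b → b < n →
    h (a + 1) (b + 1) + h (a - 1) b ≤ h a b + h a (b + 1)

/-- First derived t-array `T1`: `x_{b+1-a}^{(n-a)} = h_{a,b+1} - h_{a,b}`,
so `x_j^(i) = h_{n-i, n-i+j} - h_{n-i, n-i+j-1}`. -/
def dT1 (n : ℕ) (h : ℕ → ℕ → ℤ) (i j : ℕ) : ℤ :=
  h (n - i) (n - i + j) - h (n - i) (n - i + j - 1)

/-- Second derived t-array `T2`: `y_{a+1}^{(b+1)} = h_{a+1,b+1} - h_{a,b+1}`,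
so `y_j^(i) = h_{j,i} - h_{j-1,i}`. -/
def dT2 (h : ℕ → ℕ → ℤ) (i j : ℕ) : ℤ :=
  h j i - h (j - 1) i

/-- Third derived t-array `T3`: `z_{a+1}^{(n+a-b)} = h_{a+1,b+1} - h_{a,b}`,
so `z_j^(i) = h_{j, n+j-i} - h_{j-1, n+j-1-i}`. -/
def dT3 (n : ℕ) (h : ℕ → ℕ → ℤ) (i j : ℕ) : ℤ :=
  h j (n + j - i) - h (j - 1) (n + j - 1 - i)

/-- The dual t-array: `s_j^(i) = -t_{i+1-j}^(i)`. -/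
def dualT (t : ℕ → ℕ → ℤ) (i j : ℕ) : ℤ := - t i (i + 1 - j)

/-- The weight of a t-array: `w_i = Σ_{k=1}^i t_k^(i) - Σ_{k=1}^{i-1} t_k^(i-1)`. -/
def wt (t : ℕ → ℕ → ℤ) (i : ℕ) : ℤ :=
  (∑ k ∈ Finset.Icc 1 i, t i k) - ∑ k ∈ Finset.Icc 1 (i - 1), t (i - 1) k

/-- The Gelfand–Zelevinsky exponent
`ε_j^(i)(T) = Σ_{1 ≤ h < j} (t_h^(i+1) - 2 t_h^(i) + t_h^(i-1)) + (t_j^(i+1) - t_j^(i))`. -/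
def expo (t : ℕ → ℕ → ℤ) (i j : ℕ) : ℤ :=
  (∑ h ∈ Finset.Icc 1 (j - 1), (t (i + 1) h - 2 * t i h + t (i - 1) h)) +
    (t (i + 1) j - t i j)

/-- Boundary conditions for an h-array in `H(μ,ν,λ)`. -/
def IsBoundary (n : ℕ) (mu nu lam : ℕ → ℤ) (h : ℕ → ℕ → ℤ) : Prop :=
  h 0 0 = 0 ∧
  (∀ i, 1 ≤ i → i ≤ n → h 0 i = ∑ k ∈ Finset.Icc 1 i, mu k) ∧
  (∀ i, 1 ≤ i → i ≤ n →
    h i n = (∑ k ∈ Finset.Icc 1 n, mu k) + ∑ k ∈ Finset.Icc 1 i, nu k) ∧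
  (∀ i, 1 ≤ i → i ≤ n → h i i = ∑ k ∈ Finset.Icc 1 i, lam k)

/-- A weakly decreasing sequence of nonnegative integers of length `n`
(a polynomial dominant weight). -/
def IsDomWeight (n : ℕ) (mu : ℕ → ℤ) : Prop :=
  (∀ i, 1 ≤ i → i + 1 ≤ n → mu (i + 1) ≤ mu i) ∧ (∀ i, 1 ≤ i → i ≤ n → 0 ≤ mu i)

/-- `cnt mu lam Y i j` is the number of entries equal to `i` in row `j` of the
filling `Y` of the skew shape `lam/mu` (row `j` occupies columns `mu j + 1, …, lam j`). -/
def cnt (mu lam : ℕ → ℕ) (Y : ℕ → ℕ → ℕ) (i j : ℕ) : ℕ :=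
  ((Finset.Icc (mu j + 1) (lam j)).filter (fun c => Y j c = i)).card

/-- Entries weakly increase from left to right in every row. -/
def RowWeak (n : ℕ) (mu lam : ℕ → ℕ) (Y : ℕ → ℕ → ℕ) : Prop :=
  ∀ j c c' : ℕ, 1 ≤ j → j ≤ n → mu j < c → c ≤ c' → c' ≤ lam j → Y j c ≤ Y j c'

/-- Entries strictly increase from top to bottom in every column. -/
def ColStrict (n : ℕ) (mu lam : ℕ → ℕ) (Y : ℕ → ℕ → ℕ) : Prop :=
  ∀ j c : ℕ, 1 ≤ j → j + 1 ≤ n → mu j < c → c ≤ lam j → mu (j + 1) < c →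
    c ≤ lam (j + 1) → Y j c < Y (j + 1) c

/-- All entries of the filling lie in `{1, …, n}`. -/
def EntriesIn (n : ℕ) (mu lam : ℕ → ℕ) (Y : ℕ → ℕ → ℕ) : Prop :=
  ∀ j c : ℕ, 1 ≤ j → j ≤ n → mu j < c → c ≤ lam j → 1 ≤ Y j c ∧ Y j c ≤ n

/-- The filling has content `nu`: the entry `k` appears `nu k` times. -/
def HasContent (n : ℕ) (mu lam nu : ℕ → ℕ) (Y : ℕ → ℕ → ℕ) : Prop :=
  ∀ k, 1 ≤ k → k ≤ n → (∑ j ∈ Finset.Icc 1 n, cnt mu lam Y k j) = nu k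

/-- The `j`-th row of the filling, read from left to right. -/
def rowWord (mu lam : ℕ → ℕ) (Y : ℕ → ℕ → ℕ) (j : ℕ) : List ℕ :=
  (List.range (lam j - mu j)).map (fun k => Y j (mu j + 1 + k))

/-- The reverse reading word: read the rows left to right, starting from the bottom row. -/
def revReadingWord (n : ℕ) (mu lam : ℕ → ℕ) (Y : ℕ → ℕ → ℕ) : List ℕ :=
  ((List.range n).map (fun r => rowWord mu lam Y (n - r))).flatten

/-- A word `x_1 … x_r` is Yamanouchi (a lattice permutation) if every suffix
contains at least as many `a`'s as `(a+1)`'s, for every `a ≥ 1`. -/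
def IsYamanouchiWord (w : List ℕ) : Prop :=
  ∀ s : List ℕ, s <:+ w → ∀ a : ℕ, 1 ≤ a → s.count (a + 1) ≤ s.count a

/-- A partition with at most `n` parts. -/
def IsPartition (n : ℕ) (lam : ℕ → ℕ) : Prop :=
  (∀ i, 1 ≤ i → lam (i + 1) ≤ lam i) ∧ ∀ i, n < i → lam i = 0

/-- Normalisation: the filling vanishes outside the boxes of the skew shape `lam/mu`. -/
def NormFilling (n : ℕ) (mu lam : ℕ → ℕ) (Y : ℕ → ℕ → ℕ) : Prop :=
  ∀ j c, ¬(1 ≤ j ∧ j ≤ n ∧ mu j < c ∧ c ≤ lam j) → Y j c = 0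

/-- A Littlewood–Richardson tableau of shape `lam/mu` and content `nu`:
a semistandard skew tableau with entries in `{1,…,n}` whose reverse reading
word is Yamanouchi. -/
def IsLR (n : ℕ) (mu lam nu : ℕ → ℕ) (Y : ℕ → ℕ → ℕ) : Prop :=
  RowWeak n mu lam Y ∧ ColStrict n mu lam Y ∧ EntriesIn n mu lam Y ∧
    IsYamanouchiWord (revReadingWord n mu lam Y) ∧ HasContent n mu lam nu Y

section Aux
variable (mu lam : ℕ → ℕ) (Y : ℕ → ℕ → ℕ)

def Wlist (m : ℕ) : List ℕ :=
  ((List.range m).map (fun r => rowWord mu lam Y (m - r))).flatten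

lemma Wlist_zero : Wlist mu lam Y 0 = [] := rfl

lemma Wlist_succ (m : ℕ) :
    Wlist mu lam Y (m + 1) = rowWord mu lam Y (m + 1) ++ Wlist mu lam Y m := by
  unfold Wlist
  rw [List.range_succ_eq_map, List.map_cons, List.flatten_cons, List.map_map]
  simp [Function.comp_def, Nat.succ_sub_succ]

lemma revReadingWord_eq_Wlist (n : ℕ) :
    revReadingWord n mu lam Y = Wlist mu lam Y n := rfl

lemma count_range_map (f : ℕ → ℕ) (v a : ℕ) (d : ℕ) :
    ((List.range d).map (fun k => f (a + 1 + k))).count v =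
      ((Finset.Icc (a + 1) (a + d)).filter (fun c => f c = v)).card := by
  induction d with
  | zero => simp
  | succ d ih =>
    rw [List.range_succ, List.map_append, List.count_append, ih]
    have h1 : Finset.Icc (a + 1) (a + (d + 1)) =
        insert (a + d + 1) (Finset.Icc (a + 1) (a + d)) := by
      rw [show a + (d + 1) = (a + d) + 1 from rfl,
        Finset.insert_Icc_right_eq_Icc_add_one (by omega)]
    rw [h1, Finset.filter_insert]
    by_cases hv : f (a + d + 1) = v
    · rw [if_pos hv, Finset.card_insert_of_notMem (by simp)]
      have h2 : f (a + 1 + d) = v := by rwa [show a + 1 + d = a + d + 1 by omega]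
      simp [List.count_cons, h2]
    · rw [if_neg hv]
      have h2 : ¬ f (a + 1 + d) = v := by rwa [show a + 1 + d = a + d + 1 by omega]
      simp [List.count_cons, h2]

lemma count_rowWord (v j : ℕ) :
    (rowWord mu lam Y j).count v = cnt mu lam Y v j := by
  unfold rowWord cnt
  rcases le_or_gt (mu j) (lam j) with h | h
  · have : lam j = mu j + (lam j - mu j) := by omega
    rw [count_range_map (Y j) v (mu j) (lam j - mu j), ← this]
  · have h0 : lam j - mu j = 0 := by omega
    have h1 : Finset.Icc (mu j + 1) (lam j) = ∅ := by
      apply Finset.Icc_eq_empty; omega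
    simp [h0, h1]

lemma count_Wlist (v m : ℕ) :
    (Wlist mu lam Y m).count v = ∑ k ∈ Finset.Icc 1 m, cnt mu lam Y v k := by
  induction m with
  | zero => simp [Wlist_zero]
  | succ m ih =>
    rw [Wlist_succ, List.count_append, ih, count_rowWord,
      Finset.sum_Icc_succ_top (by omega)]
    omega

lemma Wlist_suffix {j m : ℕ} (h : j ≤ m) :
    Wlist mu lam Y j <:+ Wlist mu lam Y m := by
  induction m with
  | zero => simp_all
  | succ m ih =>
    rcases Nat.eq_or_lt_of_le h with rfl | h'
    · exact List.suffix_refl _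
    · exact (ih (by omega)).trans (by rw [Wlist_succ]; exact List.suffix_append _ _)

lemma suffix_append_cases {s B : List ℕ} :
    ∀ A : List ℕ, s <:+ A ++ B → s <:+ B ∨ ∃ t, t <:+ A ∧ s = t ++ B := by
  intro A
  induction A with
  | nil => intro h; exact Or.inl (by simpa using h)
  | cons a A ih =>
    intro h
    rcases List.suffix_cons_iff.mp h with h1 | h2
    · exact Or.inr ⟨a :: A, List.suffix_refl _, by simpa using h1⟩
    · rcases ih h2 with h3 | ⟨t, ht, rfl⟩
      · exact Or.inl h3
      · exact Or.inr ⟨t, ht.trans (List.suffix_cons a A), rfl⟩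

lemma Wlist_suffix_cases {s : List ℕ} {m : ℕ} (h : s <:+ Wlist mu lam Y m) :
    s = [] ∨ ∃ j, 1 ≤ j ∧ j ≤ m ∧ ∃ t, t <:+ rowWord mu lam Y j ∧
      s = t ++ Wlist mu lam Y (j - 1) := by
  induction m with
  | zero => left; simpa [Wlist_zero] using h
  | succ m ih =>
    rw [Wlist_succ] at h
    rcases suffix_append_cases _ h with h1 | ⟨t, ht, rfl⟩
    · rcases ih h1 with h2 | ⟨j, hj1, hj2, ht⟩
      · exact Or.inl h2
      · exact Or.inr ⟨j, hj1, by omega, ht⟩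
    · exact Or.inr ⟨m + 1, by omega, le_refl _, t, ht, by simp⟩

lemma mem_rowWord_bounds {n x j : ℕ}
    (hent : ∀ j c : ℕ, 1 ≤ j → j ≤ n → mu j < c → c ≤ lam j → 1 ≤ Y j c ∧ Y j c ≤ n)
    (hj1 : 1 ≤ j) (hjn : j ≤ n) (hx : x ∈ rowWord mu lam Y j) : x ≤ n := by
  unfold rowWord at hx
  rcases List.mem_map.mp hx with ⟨k, hk, rfl⟩
  rw [List.mem_range] at hk
  exact (hent j (mu j + 1 + k) hj1 hjn (by omega) (by omega)).2

lemma mem_Wlist_bounds {n x m : ℕ}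
    (hent : ∀ j c : ℕ, 1 ≤ j → j ≤ n → mu j < c → c ≤ lam j → 1 ≤ Y j c ∧ Y j c ≤ n)
    (hm : m ≤ n) (hx : x ∈ Wlist mu lam Y m) : x ≤ n := by
  unfold Wlist at hx
  rcases List.mem_flatten.mp hx with ⟨l, hl, hxl⟩
  rcases List.mem_map.mp hl with ⟨r, hr, rfl⟩
  rw [List.mem_range] at hr
  exact mem_rowWord_bounds mu lam Y hent (by omega) (by omega) hxl

lemma rowWord_sorted {n j : ℕ}
    (hrow : ∀ j c c' : ℕ, 1 ≤ j → j ≤ n → mu j < c → c ≤ c' → c' ≤ lam j → Y j c ≤ Y j c')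
    (hj1 : 1 ≤ j) (hjn : j ≤ n) : List.Pairwise (· ≤ ·) (rowWord mu lam Y j) := by
  unfold rowWord
  rw [List.pairwise_map]
  refine (List.pairwise_lt_range (n := lam j - mu j)).imp_of_mem ?_
  intro a b ha hb hab
  rw [List.mem_range] at ha hb
  exact hrow j (mu j + 1 + a) (mu j + 1 + b) hj1 hjn (by omega) (by omega) (by omega)

end Aux

lemma sorted_dropWhile_gt {l : List ℕ} {i : ℕ} (hs : List.Pairwise (· ≤ ·) l) :
    ∀ x ∈ l.dropWhile (fun y => y ≤ i), i < x := by
  intro x hx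
  have hsd : List.Pairwise (· ≤ ·) (l.dropWhile (fun y => y ≤ i)) :=
    hs.sublist (List.dropWhile_suffix _).sublist
  cases hd : l.dropWhile (fun y => y ≤ i) with
  | nil => rw [hd] at hx; cases hx
  | cons h tl =>
    have h0 : ¬ (h ≤ i) := by
      have h1 := List.dropWhile_get_zero_not (p := fun y => decide (y ≤ i)) l
        (by rw [hd]; simp)
      rw [List.get_eq_getElem] at h1
      simp only [hd, List.getElem_cons_zero] at h1
      simpa using h1
    rw [hd] at hx hsd
    rcases List.mem_cons.mp hx with rfl | hx'
    · omega
    · have := (List.pairwise_cons.mp hsd).1 x hx'; omega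

/-- For a semistandard skew tableau, the reverse reading word is Yamanouchi iff
`Σ_{k=1}^j a_{i+1,k} ≤ Σ_{k=1}^{j-1} a_{i,k}` for all `1 ≤ j ≤ n`, `1 ≤ i < n`;
and the Yamanouchi condition forces `a_{i,j} = 0` for `i > j`. -/
theorem yamanouchi_iff_count (n : ℕ) (lam mu : ℕ → ℕ) (Y : ℕ → ℕ → ℕ)
    (hlam : IsPartition n lam) (hmu : IsPartition n mu)
    (hsub : ∀ j, mu j ≤ lam j)
    (hrow : RowWeak n mu lam Y) (hcol : ColStrict n mu lam Y)
    (hent : EntriesIn n mu lam Y) :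
    (IsYamanouchiWord (revReadingWord n mu lam Y) ↔
      ∀ i j : ℕ, 1 ≤ i → i + 1 ≤ n → 1 ≤ j → j ≤ n →
        ∑ k ∈ Finset.Icc 1 j, cnt mu lam Y (i + 1) k ≤
          ∑ k ∈ Finset.Icc 1 (j - 1), cnt mu lam Y i k) ∧
    (IsYamanouchiWord (revReadingWord n mu lam Y) →
      ∀ i j : ℕ, 1 ≤ j → j ≤ n → j < i → cnt mu lam Y i j = 0) := by
  have fwd : IsYamanouchiWord (revReadingWord n mu lam Y) →
      ∀ i j : ℕ, 1 ≤ i → i + 1 ≤ n → 1 ≤ j → j ≤ n →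
        ∑ k ∈ Finset.Icc 1 j, cnt mu lam Y (i + 1) k ≤
          ∑ k ∈ Finset.Icc 1 (j - 1), cnt mu lam Y i k := by
    intro hY i j hi hin hj hjn
    obtain ⟨j', rfl⟩ : ∃ j', j = j' + 1 := ⟨j - 1, by omega⟩
    have hsortL : List.Pairwise (· ≤ ·) (rowWord mu lam Y (j' + 1)) :=
      rowWord_sorted mu lam Y hrow hj hjn
    set L := rowWord mu lam Y (j' + 1) with hLdef
    set t := L.dropWhile (fun y => y ≤ i) with htdef
    have hts : t <:+ L := List.dropWhile_suffix _
    have hsfx : t ++ Wlist mu lam Y j' <:+ revReadingWord n mu lam Y := by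
      rw [revReadingWord_eq_Wlist]
      have h1 : t ++ Wlist mu lam Y j' <:+ Wlist mu lam Y (j' + 1) := by
        rw [Wlist_succ]
        obtain ⟨p, hp⟩ := hts
        exact ⟨p, by rw [← List.append_assoc, hp]⟩
      exact h1.trans (Wlist_suffix mu lam Y hjn)
    have hYam := hY _ hsfx i hi
    rw [List.count_append, List.count_append, count_Wlist, count_Wlist] at hYam
    have hgt : ∀ x ∈ t, i < x := sorted_dropWhile_gt hsortL
    have hti : t.count i = 0 := by
      rw [List.count_eq_zero]
      intro hmem
      exact absurd (hgt i hmem) (lt_irrefl i)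
    have hti1 : t.count (i + 1) = cnt mu lam Y (i + 1) (j' + 1) := by
      have hsplit : L.count (i + 1) =
          (L.takeWhile (fun y => y ≤ i)).count (i + 1) + t.count (i + 1) := by
        conv_lhs => rw [← List.takeWhile_append_dropWhile (p := fun y => y ≤ i) (l := L)]
        rw [List.count_append]
      have h0 : (L.takeWhile (fun y => y ≤ i)).count (i + 1) = 0 := by
        rw [List.count_eq_zero]
        intro hmem
        have := List.mem_takeWhile_imp hmem
        simp at this
      have hLc : L.count (i + 1) = cnt mu lam Y (i + 1) (j' + 1) :=
        count_rowWord mu lam Y _ _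
      omega
    rw [hti, hti1] at hYam
    rw [Finset.sum_Icc_succ_top (show 1 ≤ j' + 1 by omega)]
    simp only [Nat.add_sub_cancel]
    omega
  refine ⟨⟨fwd, ?_⟩, ?_⟩
  · -- backward direction
    intro hcond s hs a ha
    rw [revReadingWord_eq_Wlist] at hs
    rcases Wlist_suffix_cases mu lam Y hs with rfl | ⟨j, hj1, hjn, t, ht, rfl⟩
    · simp
    · rw [List.count_append, List.count_append, count_Wlist, count_Wlist]
      by_cases han : a + 1 ≤ n
      · obtain ⟨j', rfl⟩ : ∃ j', j = j' + 1 := ⟨j - 1, by omega⟩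
        have key := hcond a (j' + 1) ha han hj1 hjn
        rw [Finset.sum_Icc_succ_top (show 1 ≤ j' + 1 by omega)] at key
        simp only [Nat.add_sub_cancel] at key
        have hta : t.count (a + 1) ≤ cnt mu lam Y (a + 1) (j' + 1) := by
          rw [← count_rowWord mu lam Y]
          exact ht.sublist.count_le _
        simp only [Nat.add_sub_cancel]
        omega
      · have h1 : t.count (a + 1) = 0 := by
          rw [List.count_eq_zero]
          intro hmem
          have := mem_rowWord_bounds mu lam Y hent hj1 hjn (ht.sublist.subset hmem)
          omega
        have h3 : ∑ k ∈ Finset.Icc 1 (j - 1), cnt mu lam Y (a + 1) k = 0 := by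
          apply Finset.sum_eq_zero
          intro k hk
          rw [Finset.mem_Icc] at hk
          rw [cnt, Finset.card_eq_zero, Finset.filter_eq_empty_iff]
          intro c hc
          rw [Finset.mem_Icc] at hc
          have := (hent k c hk.1 (by omega) (by omega) hc.2).2
          omega
        rw [h1, h3]
        simp
  · -- second part
    intro hY i j hj1 hjn hji
    by_cases hin : i ≤ n
    · have hcond := fwd hY
      have L : ∀ j, j ≤ n → ∀ i, j < i → i ≤ n →
          ∑ k ∈ Finset.Icc 1 j, cnt mu lam Y i k = 0 := by
        intro j
        induction j with
        | zero => intros; simp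
        | succ j ih =>
          intro hjn i hji hin
          obtain ⟨i', rfl⟩ : ∃ i', i = i' + 1 := ⟨i - 1, by omega⟩
          have h1 := hcond i' (j + 1) (by omega) (by omega) (by omega) hjn
          simp only [Nat.add_sub_cancel] at h1
          have h2 := ih (by omega) i' (by omega) (by omega)
          omega
      have h0 := L j hjn i hji hin
      exact Finset.sum_eq_zero_iff.mp h0 j (Finset.mem_Icc.mpr ⟨hj1, le_refl j⟩)
    · rw [cnt, Finset.card_eq_zero, Finset.filter_eq_empty_iff]
      intro c hc
      rw [Finset.mem_Icc] at hc
      have := (hent j c hj1 hjn (by omega) hc.2).2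
      omega
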